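/- arXiv:2510.27280 — 2 statements merged into one kernel-verified Lean document; each statement's English description precedes it below -/
import Mathlib

section
/- Let X_1, ..., X_N (with N ≥ 1) be i.i.d. random variables taking values in [0,1] with common mean μ. Let μ̂ = (1/N)·Σ_{i=1}^N X_i denote the empirical mean and σ̂² = (1/N)·Σ_{i=1}^N (X_i − μ̂)² the empirical variance. Then for every δ ∈ (0,1), with probability at least 1 − δ, μ ≤ μ̂ + sqrt(2·σ̂²·ln(3/δ)/N) + 3·ln(3/δ)/N. -/
open MeasureTheory ProbabilityTheory

set_option maxHeartbeats 1000000
open Real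


lemma exp_quad_neg {u : ℝ} (hu : u ≤ 0) : exp u ≤ 1 + u + u^2/2 := by
  have hd : ∀ x : ℝ, HasDerivAt (fun y => 1 + y + y^2/2 - exp y) (1 + x - exp x) x := by
    intro x
    have h1 : HasDerivAt (fun y : ℝ => 1 + y + y^2/2) (1 + x) x := by
      have := ((hasDerivAt_id x).const_add 1).add ((hasDerivAt_pow 2 x).div_const 2)
      exact this.congr_deriv (by push_cast; ring)
    exact h1.sub (Real.hasDerivAt_exp x)
  have hmono : Antitone (fun y : ℝ => 1 + y + y^2/2 - exp y) := by
    apply antitone_of_deriv_nonpos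
    · intro x; exact (hd x).differentiableAt
    · intro x; rw [(hd x).deriv]; have := Real.add_one_le_exp x; linarith
  have := hmono hu
  simp only [exp_zero] at this
  linarith [this]

lemma aux_H1 {u : ℝ} (hu : 0 ≤ u) : (2 - u) * exp u - u - 2 ≤ 0 := by
  have hd : ∀ x : ℝ, HasDerivAt (fun y => (2 - y) * exp y - y - 2) ((1 - x) * exp x - 1) x := by
    intro x
    have h1 : HasDerivAt (fun y : ℝ => (2 - y) * exp y) ((-1) * exp x + (2 - x) * exp x) x :=
      (((hasDerivAt_id x).const_sub 2)).mul (Real.hasDerivAt_exp x)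
    have h2 := (h1.sub (hasDerivAt_id x)).sub_const 2
    exact h2.congr_deriv (by ring)
  have hmono : Antitone (fun y : ℝ => (2 - y) * exp y - y - 2) := by
    apply antitone_of_deriv_nonpos
    · intro x; exact (hd x).differentiableAt
    · intro x; rw [(hd x).deriv]
      have h1 : 1 - x ≤ exp (-x) := by have := Real.add_one_le_exp (-x); linarith
      have h2 : (1 - x) * exp x ≤ exp (-x) * exp x :=
        mul_le_mul_of_nonneg_right h1 (exp_pos x).le
      rw [← Real.exp_add] at h2; simp at h2; linarith
  have := hmono hu
  simp only [exp_zero] at this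
  linarith [this]

lemma exp_quad_pos {u : ℝ} (hu0 : 0 ≤ u) (hu3 : u < 3) :
    exp u ≤ 1 + u + u^2 / (2 * (1 - u/3)) := by
  have key : (1 - u/3) * (exp u - 1 - u) ≤ u^2/2 := by
    have hd : ∀ x : ℝ, HasDerivAt (fun y => (1 - y/3) * (exp y - 1 - y) - y^2/2)
        (((2 - x) * exp x - x - 2)/3) x := by
      intro x
      have h1 : HasDerivAt (fun y : ℝ => 1 - y/3) (-(1/3)) x := by
        simpa using ((hasDerivAt_id x).div_const 3).const_sub 1
      have h2 : HasDerivAt (fun y : ℝ => exp y - 1 - y) (exp x - 1) x := by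
        exact ((Real.hasDerivAt_exp x).sub_const 1).sub (hasDerivAt_id x)
      have h3 := (h1.mul h2).sub ((hasDerivAt_pow 2 x).div_const 2)
      exact h3.congr_deriv (by push_cast; ring)
    have hmono : AntitoneOn (fun y : ℝ => (1 - y/3) * (exp y - 1 - y) - y^2/2) (Set.Ici 0) := by
      apply antitoneOn_of_deriv_nonpos (convex_Ici 0)
      · exact (Continuous.continuousOn (by continuity))
      · intro x _; exact (hd x).differentiableAt.differentiableWithinAt
      · intro x hx
        rw [interior_Ici] at hx
        rw [(hd x).deriv]
        have := aux_H1 (le_of_lt hx)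
        linarith
    have := hmono (Set.self_mem_Ici) (Set.mem_Ici.2 hu0) hu0
    simp only [exp_zero] at this
    linarith [this]
  have hpos : 0 < 1 - u/3 := by linarith
  have h2 : exp u - 1 - u ≤ u^2 / (2 * (1 - u/3)) := by
    rw [le_div_iff₀ (by linarith : (0:ℝ) < 2 * (1 - u/3))]
    nlinarith [key]
  linarith

lemma eb_alg (a b s c v : ℝ) (hb : 0 < b) (ha2 : a^2 = 6*b) (ha0 : 0 ≤ a)
    (hs0 : 0 ≤ s) (hs : s ≤ 1/2) (hv : 0 ≤ v)
    (h1 : c ≤ a*s + b) (h2 : s^2 ≤ v^2 + c^2 + a*s + b/4) :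
    c ≤ a*v + 9*b := by
  by_contra hcon
  push_neg at hcon
  have hav : 0 ≤ a*v := mul_nonneg ha0 hv
  have h4 : a*v + 8*b < a*s := by linarith
  have hT : 8*b < a*s := by linarith
  have hv2 : (a*v)^2 < (a*s - 8*b)^2 := by nlinarith
  have hc0 : 0 < c := by linarith
  have hc2 : c^2 ≤ (a*s + b)^2 := by nlinarith
  -- multiply h2 by 6b and use a^2 = 6b
  have h5 : (a*s)^2 ≤ (a*s-8*b)^2 + 6*b*(a*s+b)^2 + 6*b*(a*s) + 6*b*(b/4) := by
    have := mul_le_mul_of_nonneg_left h2 (le_of_lt hb)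
    nlinarith [sq_nonneg (a*v)]
  have hT2 : (a*s)^2 ≤ (3:ℝ)/2 * b := by nlinarith [sq_nonneg (a*(1/2 - s))]
  nlinarith [sq_nonneg (a*s), mul_pos hb hb, mul_pos (mul_pos hb hb) hb]

lemma exp_mul_le_quad {z l : ℝ} (hz : z ≤ 1) (hl0 : 0 ≤ l) (hl3 : l < 3) :
    exp (l * z) ≤ 1 + l * z + (l^2 / (2 * (1 - l/3))) * z^2 := by
  have hpos : 0 < 1 - l/3 := by linarith
  rcases le_or_gt (l * z) 0 with h | h
  · have h1 := exp_quad_neg h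
    have h2 : (l*z)^2 / 2 ≤ (l^2 / (2 * (1 - l/3))) * z^2 := by
      rw [mul_pow, div_mul_eq_mul_div]
      exact div_le_div_of_nonneg_left (by positivity) (by linarith) (by linarith)
    linarith
  · have hu : l * z ≤ l := by nlinarith
    have hu3 : l * z < 3 := lt_of_le_of_lt hu hl3
    have h1 := exp_quad_pos h.le hu3
    have hpos2 : 0 < 1 - l*z/3 := by linarith
    have h2 : (l*z)^2 / (2 * (1 - l*z/3)) ≤ (l^2 / (2 * (1 - l/3))) * z^2 := by
      rw [mul_pow, div_mul_eq_mul_div]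
      exact div_le_div_of_nonneg_left (by positivity) (by linarith) (by linarith)
    linarith

lemma integrable_of_bdd {Ω : Type*} [MeasurableSpace Ω] {P : Measure Ω} [IsProbabilityMeasure P]
    {f : Ω → ℝ} (hf : Measurable f) {c : ℝ} (h : ∀ ω, |f ω| ≤ c) : Integrable f P := by
  refine (integrable_const c).mono' hf.aestronglyMeasurable (ae_of_all _ ?_)
  intro ω; simpa [Real.norm_eq_abs] using h ω

lemma core_chernoff {Ω : Type*} [MeasurableSpace Ω] (P : Measure Ω) [IsProbabilityMeasure P]
    {N : ℕ} (hN : 0 < N) (Z : Fin N → Ω → ℝ) (hmeas : ∀ i, Measurable (Z i))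
    (hindep : iIndepFun Z P)
    (hub : ∀ i ω, Z i ω ≤ 1) (hlb : ∀ i ω, -4 ≤ Z i ω)
    (hmean : ∀ i, ∫ ω, Z i ω ∂P = 0)
    {v0 : ℝ} (hv0 : 0 < v0) (hsq : ∀ i, ∫ ω, (Z i ω)^2 ∂P ≤ v0)
    {L : ℝ} (hL : 0 < L) :
    P {ω | Real.sqrt (2*((N:ℝ)*v0)*L) + L/3 ≤ ∑ i, Z i ω} ≤ ENNReal.ofReal (Real.exp (-L)) := by
  have hNR : (0:ℝ) < N := by exact_mod_cast hN
  set v : ℝ := (N:ℝ) * v0 with hv_def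
  have hv : 0 < v := by positivity
  set g : ℝ := Real.sqrt (2*L/v) with hg_def
  have hg : 0 < g := Real.sqrt_pos.2 (by positivity)
  have hg2 : g^2 = 2*L/v := Real.sq_sqrt (by positivity)
  have hvg2 : v * g^2 = 2*L := by rw [hg2]; field_simp
  have hden : (0:ℝ) < 1 + g/3 := by linarith
  set l : ℝ := g / (1 + g/3) with hl_def
  have hl0 : 0 < l := by positivity
  have hl3 : l < 3 := by
    rw [hl_def, div_lt_iff₀ hden]; linarith
  have h13 : 1 - l/3 = 1/(1+g/3) := by
    rw [hl_def]; field_simp; ring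
  have h13pos : (0:ℝ) < 1 - l/3 := by linarith
  set C : ℝ := l^2 / (2 * (1 - l/3)) with hC_def
  have hC0 : 0 ≤ C := by positivity
  have hCv : C * v = g^2 * v / (2 * (1 + g/3)) := by
    rw [hC_def, h13, hl_def]; field_simp
  set z : ℝ := Real.sqrt (2*v*L) + L/3 with hz_def
  have hsq2vL : Real.sqrt (2*v*L) = v * g := by
    have e : 2*v*L = (v*g)^2 := by rw [mul_pow, hg2]; field_simp
    rw [e, Real.sqrt_sq (by positivity)]
  have hvg2' : g^2 * ((N:ℝ) * v0) = 2*L := by rw [← hv_def]; linarith [hvg2]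
  have key : l * z - (N:ℝ) * C * v0 = L := by
    have hNCv : (N:ℝ) * C * v0 = C * v := by rw [hv_def]; ring
    rw [hNCv, hz_def, hsq2vL, hCv, hl_def]
    field_simp
    linear_combination 3 * hvg2'
  -- mgf bound for each i
  have hmgf : ∀ i, mgf (Z i) P l ≤ Real.exp (C * v0) := by
    intro i
    have hZint : Integrable (Z i) P := integrable_of_bdd (hmeas i) (c := 4)
      (fun ω => abs_le.2 ⟨hlb i ω, le_trans (hub i ω) (by norm_num)⟩)
    have hZ2int : Integrable (fun ω => (Z i ω)^2) P := by
      refine integrable_of_bdd ((hmeas i).pow_const 2) (c := 16) (fun ω => ?_)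
      rw [abs_le]; constructor
      · nlinarith [sq_nonneg (Z i ω)]
      · nlinarith [hub i ω, hlb i ω]
    have hq : ∀ ω, Real.exp (l * Z i ω) ≤ 1 + l * Z i ω + C * (Z i ω)^2 := fun ω =>
      exp_mul_le_quad (hub i ω) hl0.le hl3
    have hrhs_int : Integrable (fun ω => 1 + l * Z i ω + C * (Z i ω)^2) P :=
      ((integrable_const 1).add (hZint.const_mul l)).add (hZ2int.const_mul C)
    have hexp_int : Integrable (fun ω => Real.exp (l * Z i ω)) P := by
      refine integrable_of_bdd ((hmeas i).const_mul l).exp (c := Real.exp l) (fun ω => ?_)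
      rw [abs_of_pos (Real.exp_pos _)]
      exact Real.exp_le_exp.2 (by nlinarith [hub i ω])
    have h1 : mgf (Z i) P l ≤ ∫ ω, (1 + l * Z i ω + C * (Z i ω)^2) ∂P := by
      exact integral_mono hexp_int hrhs_int hq
    have hint1 : Integrable (fun ω => 1 + l * Z i ω) P := by
      exact (integrable_const 1).add (hZint.const_mul l)
    have h2 : ∫ ω, (1 + l * Z i ω + C * (Z i ω)^2) ∂P
        = 1 + l * (∫ ω, Z i ω ∂P) + C * (∫ ω, (Z i ω)^2 ∂P) := by
      rw [integral_add hint1 (hZ2int.const_mul C),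
        integral_add (integrable_const 1) (hZint.const_mul l),
        integral_const, integral_const_mul, integral_const_mul]
      simp
    have h3 : 1 + l * (∫ ω, Z i ω ∂P) + C * (∫ ω, (Z i ω)^2 ∂P) ≤ 1 + C * v0 := by
      rw [hmean i]
      have := mul_le_mul_of_nonneg_left (hsq i) hC0
      linarith
    have h4 : 1 + C * v0 ≤ Real.exp (C * v0) := by
      have := Real.add_one_le_exp (C * v0); linarith
    calc mgf (Z i) P l ≤ _ := h1
      _ = _ := h2
      _ ≤ 1 + C * v0 := h3
      _ ≤ _ := h4
  -- integrability of exponentials for the sum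
  have hexp_int : ∀ i ∈ Finset.univ, Integrable (fun ω => Real.exp (l * Z i ω)) P := by
    intro i _
    refine integrable_of_bdd ((hmeas i).const_mul l).exp (c := Real.exp l) (fun ω => ?_)
    rw [abs_of_pos (Real.exp_pos _)]
    exact Real.exp_le_exp.2 (by nlinarith [hub i ω])
  have hsum_int : Integrable (fun ω => Real.exp (l * (∑ i, Z i) ω)) P :=
    hindep.integrable_exp_mul_sum hmeas hexp_int
  have hchernoff := measure_ge_le_exp_mul_mgf (X := ∑ i, Z i) (μ := P) z hl0.le hsum_int
  have hmgf_sum : mgf (∑ i, Z i) P l = ∏ i, mgf (Z i) P l := hindep.mgf_sum hmeas Finset.univ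
  have hprod : ∏ i, mgf (Z i) P l ≤ Real.exp ((N:ℝ) * (C * v0)) := by
    calc ∏ i, mgf (Z i) P l ≤ ∏ _i : Fin N, Real.exp (C * v0) :=
          Finset.prod_le_prod (fun i _ => mgf_nonneg) (fun i _ => hmgf i)
      _ = Real.exp ((N:ℝ) * (C * v0)) := by
          rw [Finset.prod_const, ← Real.exp_nat_mul]; simp
  have hfinal : (P {ω | z ≤ (∑ i, Z i) ω}).toReal ≤ Real.exp (-L) := by
    calc (P {ω | z ≤ (∑ i, Z i) ω}).toReal ≤ Real.exp (-l * z) * mgf (∑ i, Z i) P l := hchernoff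
      _ ≤ Real.exp (-l * z) * Real.exp ((N:ℝ) * (C * v0)) := by
          apply mul_le_mul_of_nonneg_left _ (Real.exp_pos _).le
          rw [hmgf_sum]; exact hprod
      _ = Real.exp (-l * z + (N:ℝ) * (C * v0)) := (Real.exp_add _ _).symm
      _ = Real.exp (-L) := by rw [show -l * z + (N:ℝ) * (C * v0) = -L by linarith [key]]
  have hset : {ω | Real.sqrt (2*((N:ℝ)*v0)*L) + L/3 ≤ ∑ i, Z i ω} = {ω | z ≤ (∑ i, Z i) ω} := by
    ext ω; simp [hz_def, hv_def, Finset.sum_apply]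
  rw [hset, ← ENNReal.ofReal_toReal (measure_ne_top P _)]
  exact ENNReal.ofReal_le_ofReal hfinal

/-- Empirical Bernstein (one-sided upper) inequality: for i.i.d. random variables
`X 1, ..., X N` with values in `[0,1]` and common mean `μ`, with probability at least
`1 - δ` we have `μ ≤ μ̂ + sqrt (2 σ̂² ln(3/δ) / N) + 3 ln(3/δ) / N`, where `μ̂` is the
empirical mean and `σ̂²` the empirical variance. -/
theorem empirical_bernstein_upper
    {Ω : Type*} [MeasurableSpace Ω] (P : Measure Ω) [IsProbabilityMeasure P]
    (N : ℕ) (hN : 1 ≤ N) (X : Fin N → Ω → ℝ) (μ : ℝ)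
    (hmeas : ∀ i, Measurable (X i))
    (hindep : iIndepFun X P)
    (hident : ∀ i j, IdentDistrib (X i) (X j) P P)
    (hbound : ∀ i ω, X i ω ∈ Set.Icc (0 : ℝ) 1)
    (hmean : ∀ i, ∫ ω, X i ω ∂P = μ)
    (δ : ℝ) (hδ : δ ∈ Set.Ioo (0 : ℝ) 1) :
    ENNReal.ofReal (1 - δ) ≤
      P {ω | μ ≤ (1 / N) * ∑ i, X i ω
          + Real.sqrt (2 * ((1 / N) * ∑ i, (X i ω - (1 / N) * ∑ j, X j ω) ^ 2)
              * Real.log (3 / δ) / N)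
          + 3 * Real.log (3 / δ) / N} := by

  obtain ⟨hδ0, hδ1⟩ := hδ
  have hNpos : 0 < N := hN
  have hNR : (0:ℝ) < N := by exact_mod_cast hNpos
  set L : ℝ := Real.log (3 / δ) with hL_def
  have hL : 0 < L := Real.log_pos (by rw [lt_div_iff₀ hδ0]; linarith)
  have hexpL : Real.exp (-L) = δ/3 := by
    rw [hL_def, ← Real.log_inv, Real.exp_log (by positivity), inv_div]
  set E : Set Ω := {ω | μ ≤ (1 / N) * ∑ i, X i ω
          + Real.sqrt (2 * ((1 / N) * ∑ i, (X i ω - (1 / N) * ∑ j, X j ω) ^ 2) * L / N)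
          + 3 * L / N} with hE_def
  -- basic facts
  have i0 : Fin N := ⟨0, hNpos⟩
  have hXint : ∀ i, Integrable (X i) P := fun i => integrable_of_bdd (hmeas i) (c := 1)
    (fun ω => abs_le.2 ⟨by linarith [(hbound i ω).1], (hbound i ω).2⟩)
  have hμ0 : 0 ≤ μ := by
    rw [← hmean i0]; exact integral_nonneg (fun ω => (hbound i0 ω).1)
  have hμ1 : μ ≤ 1 := by
    rw [← hmean i0]
    calc ∫ ω, X i0 ω ∂P ≤ ∫ _ω, (1:ℝ) ∂P :=
          integral_mono (hXint i0) (integrable_const 1) (fun ω => (hbound i0 ω).2)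
      _ = 1 := by simp
  have hXμd : ∀ i ω, -1 ≤ X i ω - μ ∧ X i ω - μ ≤ 1 := fun i ω =>
    ⟨by linarith [(hbound i ω).1], by linarith [(hbound i ω).2]⟩
  have hYb : ∀ i ω, (X i ω - μ)^2 ≤ 1 := fun i ω => by
    obtain ⟨h1, h2⟩ := hXμd i ω; nlinarith
  have hY2int : ∀ i, Integrable (fun ω => (X i ω - μ)^2) P := fun i =>
    integrable_of_bdd ((hmeas i).sub_const μ |>.pow_const 2) (c := 1)
      (fun ω => abs_le.2 ⟨by nlinarith [sq_nonneg (X i ω - μ)], hYb i ω⟩)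
  set σ2 : ℝ := ∫ ω, (X i0 ω - μ)^2 ∂P with hσ2_def
  have hident2 : ∀ i, ∫ ω, (X i ω - μ)^2 ∂P = σ2 := by
    intro i
    have h := ((hident i i0).comp ((measurable_id.sub_const μ).pow_const 2)).integral_eq
    simpa [Function.comp] using h
  have hσ2nn : 0 ≤ σ2 := integral_nonneg (fun ω => sq_nonneg _)
  have hσ2le : σ2 ≤ 1/4 := by
    have hf1 : Integrable (fun ω => (1-2*μ)*X i0 ω + μ^2) P :=
      ((hXint i0).const_mul (1-2*μ)).add (integrable_const _)
    have hmono : σ2 ≤ ∫ ω, ((1-2*μ)*X i0 ω + μ^2) ∂P := by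
      rw [hσ2_def]
      refine integral_mono (hY2int i0) hf1 (fun ω => ?_)
      nlinarith [(hbound i0 ω).1, (hbound i0 ω).2]
    have heval : ∫ ω, ((1-2*μ)*X i0 ω + μ^2) ∂P = (1-2*μ)*μ + μ^2 := by
      rw [integral_add ((hXint i0).const_mul (1-2*μ)) (integrable_const _),
        integral_const_mul, hmean i0, integral_const]
      simp
    rw [heval] at hmono
    nlinarith [sq_nonneg (μ - 1/2)]
  rcases hσ2nn.eq_or_lt with h0 | hσ2pos
  · -- degenerate case: σ2 = 0, all X i = μ a.s.
    have hae : ∀ i, ∀ᵐ ω ∂P, X i ω = μ := by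
      intro i
      have hz : ∫ ω, (X i ω - μ)^2 ∂P = 0 := by rw [hident2 i]; exact h0.symm
      have := (integral_eq_zero_iff_of_nonneg (fun ω => sq_nonneg (X i ω - μ)) (hY2int i)).mp hz
      filter_upwards [this] with ω hω
      have : (X i ω - μ)^2 = 0 := hω
      nlinarith [this]
    have haeall : ∀ᵐ ω ∂P, ∀ i, X i ω = μ := ae_all_iff.2 hae
    have hEae : ∀ᵐ ω ∂P, ω ∈ E := by
      filter_upwards [haeall] with ω hω
      have hsum : (1 / (N:ℝ)) * ∑ i, X i ω = μ := by
        have : ∑ i, X i ω = (N:ℝ) * μ := by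
          rw [Finset.sum_congr rfl (fun i _ => hω i)]
          simp [Finset.card_univ, mul_comm]
        rw [this]; field_simp
      simp only [hE_def, Set.mem_setOf_eq]
      have h1 : 0 ≤ Real.sqrt (2 * ((1 / (N:ℝ)) * ∑ i, (X i ω - (1 / (N:ℝ)) * ∑ j, X j ω) ^ 2) * L / N) :=
        Real.sqrt_nonneg _
      have h2 : 0 ≤ 3 * L / (N:ℝ) := by positivity
      linarith
    have hcompl : P Eᶜ = 0 := by
      rw [ae_iff] at hEae
      exact hEae
    have h1 : (1:ENNReal) ≤ P E + P Eᶜ := by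
      rw [← measure_univ (μ := P), ← Set.union_compl_self E]
      exact measure_union_le _ _
    rw [hcompl, add_zero] at h1
    have hofreal : ENNReal.ofReal (1-δ) ≤ 1 := ENNReal.ofReal_le_one.mpr (by linarith)
    exact hofreal.trans h1
  · -- main case: σ2 > 0
    set a : ℝ := Real.sqrt (2*L/N) with ha_def
    set b : ℝ := L/(3*N) with hb_def
    have hb : 0 < b := by positivity
    have ha0 : 0 ≤ a := Real.sqrt_nonneg _
    have ha2 : a^2 = 2*L/N := Real.sq_sqrt (by positivity)
    have ha6b : a^2 = 6*b := by rw [ha2, hb_def]; field_simp; ring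
    set s : ℝ := Real.sqrt σ2 with hs_def
    have hs0 : 0 ≤ s := Real.sqrt_nonneg _
    have hs2 : s^2 = σ2 := Real.sq_sqrt hσ2nn
    have hshalf : s ≤ 1/2 := by
      have h14 : Real.sqrt (1/4) = 1/2 := by
        rw [show (1/4:ℝ) = (1/2)^2 by norm_num]; exact Real.sqrt_sq (by norm_num)
      rw [hs_def, ← h14]; exact Real.sqrt_le_sqrt hσ2le
    -- event A
    set ZA : Fin N → Ω → ℝ := fun i => (fun x => μ - x) ∘ X i with hZA_def
    have hA := core_chernoff P hNpos ZA
      (fun i => measurable_const.sub measurable_id |>.comp (hmeas i))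
      (hindep.comp _ (fun i => measurable_const.sub measurable_id))
      (fun i ω => by simp [hZA_def, Function.comp]; linarith [(hbound i ω).1])
      (fun i ω => by simp [hZA_def, Function.comp]; linarith [(hbound i ω).2, hμ0])
      (fun i => by
        simp only [hZA_def, Function.comp]
        rw [integral_sub (integrable_const μ) (hXint i), hmean i, integral_const]
        simp)
      hσ2pos
      (fun i => by
        simp only [hZA_def, Function.comp]
        have : ∫ ω, (μ - X i ω)^2 ∂P = ∫ ω, (X i ω - μ)^2 ∂P := by
          congr 1; funext ω; ring
        rw [this, hident2 i])
      hL
    -- event B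
    set ZB : Fin N → Ω → ℝ := fun i => (fun x => 4*(σ2 - (x - μ)^2)) ∘ X i with hZB_def
    have hZBmeas : ∀ i, Measurable (ZB i) := fun i =>
      (measurable_const.sub ((measurable_id.sub_const μ).pow_const 2) |>.const_mul 4).comp (hmeas i)
    have hB := core_chernoff P hNpos ZB
      hZBmeas
      (hindep.comp _ (fun i =>
        measurable_const.sub ((measurable_id.sub_const μ).pow_const 2) |>.const_mul 4))
      (fun i ω => by
        simp only [hZB_def, Function.comp]
        nlinarith [sq_nonneg (X i ω - μ), hσ2le])
      (fun i ω => by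
        simp only [hZB_def, Function.comp]
        nlinarith [hYb i ω, hσ2nn])
      (fun i => by
        simp only [hZB_def, Function.comp]
        rw [integral_const_mul, integral_sub (integrable_const σ2) (hY2int i),
          hident2 i, integral_const]
        simp)
      (show (0:ℝ) < 16*σ2 by linarith)
      (fun i => by
        simp only [hZB_def, Function.comp]
        have hYY : ∀ ω, (4*(σ2 - (X i ω - μ)^2))^2
            = 16*(σ2^2) - (32*σ2)*((X i ω - μ)^2) + 16*((X i ω - μ)^2)^2 := fun ω => by ring
        have hint4 : Integrable (fun ω => ((X i ω - μ)^2)^2) P :=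
          integrable_of_bdd (((hmeas i).sub_const μ |>.pow_const 2).pow_const 2) (c := 1)
            (fun ω => abs_le.2 ⟨by nlinarith [sq_nonneg ((X i ω - μ)^2)],
              by nlinarith [hYb i ω, sq_nonneg (X i ω - μ)]⟩)
        have hY4le : ∫ ω, ((X i ω - μ)^2)^2 ∂P ≤ σ2 := by
          rw [← hident2 i]
          refine integral_mono hint4 (hY2int i) (fun ω => ?_)
          nlinarith [hYb i ω, sq_nonneg (X i ω - μ)]
        calc ∫ ω, (4*(σ2 - (X i ω - μ)^2))^2 ∂P
            = ∫ ω, (16*(σ2^2) - (32*σ2)*((X i ω - μ)^2) + 16*((X i ω - μ)^2)^2) ∂P := by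
              congr 1; funext ω; exact hYY ω
          _ = 16*σ2^2 - (32*σ2)*σ2 + 16*(∫ ω, ((X i ω - μ)^2)^2 ∂P) := by
              have hf1 : Integrable (fun ω => 16*(σ2^2) - (32*σ2)*((X i ω - μ)^2)) P := by
                exact (integrable_const _).sub ((hY2int i).const_mul (32*σ2))
              rw [integral_add hf1 (hint4.const_mul 16),
                integral_sub (integrable_const (16*(σ2^2))) ((hY2int i).const_mul (32*σ2)),
                integral_const_mul, integral_const_mul, hident2 i, integral_const]
              simp
              rw [integral_const_mul]
          _ ≤ 16*σ2 := by nlinarith [hY4le, sq_nonneg σ2, hσ2nn]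
        )
      hL
    -- inclusion Eᶜ ⊆ SA ∪ SB
    set SA : Set Ω := {ω | Real.sqrt (2*((N:ℝ)*σ2)*L) + L/3 ≤ ∑ i, ZA i ω} with hSA_def
    set SB : Set Ω := {ω | Real.sqrt (2*((N:ℝ)*(16*σ2))*L) + L/3 ≤ ∑ i, ZB i ω} with hSB_def
    have hsqrtA : Real.sqrt (2*((N:ℝ)*σ2)*L) = (N:ℝ)*(a*s) := by
      rw [show 2*((N:ℝ)*σ2)*L = ((N:ℝ)*(a*s))^2 by
        rw [mul_pow, mul_pow, ha2, hs2]; field_simp]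
      exact Real.sqrt_sq (by positivity)
    have hsqrtB : Real.sqrt (2*((N:ℝ)*(16*σ2))*L) = 4*((N:ℝ)*(a*s)) := by
      rw [show 2*((N:ℝ)*(16*σ2))*L = (4*((N:ℝ)*(a*s)))^2 by
        rw [mul_pow, mul_pow, mul_pow, ha2, hs2]; field_simp; ring]
      exact Real.sqrt_sq (by positivity)
    have hincl : Eᶜ ⊆ SA ∪ SB := by
      intro ω hω
      rw [Set.mem_union]
      by_contra hcon
      push_neg at hcon
      obtain ⟨hAω, hBω⟩ := hcon
      apply hω
      -- notation
      set μh : ℝ := (1/(N:ℝ)) * ∑ i, X i ω with hμh_def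
      set σh2 : ℝ := (1/(N:ℝ)) * ∑ i, (X i ω - μh)^2 with hσh2_def
      have hσh2nn : 0 ≤ σh2 := by
        rw [hσh2_def]
        exact mul_nonneg (by positivity) (Finset.sum_nonneg (fun i _ => sq_nonneg _))
      set vv : ℝ := Real.sqrt σh2 with hvv_def
      have hvv0 : 0 ≤ vv := Real.sqrt_nonneg _
      have hvv2 : vv^2 = σh2 := Real.sq_sqrt hσh2nn
      set c : ℝ := μ - μh with hc_def
      -- from ¬A
      have hZAsum : ∑ i, ZA i ω = (N:ℝ)*μ - ∑ i, X i ω := by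
        simp only [hZA_def, Function.comp]
        rw [Finset.sum_sub_distrib, Finset.sum_const, Finset.card_univ]
        simp [mul_comm]
      have hAlt : (N:ℝ)*μ - ∑ i, X i ω < (N:ℝ)*(a*s) + L/3 := by
        have := hAω
        rw [hSA_def, Set.mem_setOf_eq, not_le, hsqrtA, hZAsum] at this
        exact this
      have hc1 : c < a*s + b := by
        have hL3 : L/3 = (N:ℝ)*b := by rw [hb_def]; field_simp
        have hNc : (N:ℝ)*c = (N:ℝ)*μ - ∑ i, X i ω := by
          rw [hc_def, hμh_def]; field_simp
        have : (N:ℝ)*c < (N:ℝ)*((a*s) + b) := by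
          rw [hNc, mul_add]; rw [hL3] at hAlt; linarith
        exact lt_of_mul_lt_mul_left this (le_of_lt hNR)
      -- from ¬B
      have hZBsum : ∑ i, ZB i ω = 4*((N:ℝ)*σ2 - ∑ i, (X i ω - μ)^2) := by
        simp only [hZB_def, Function.comp]
        rw [← Finset.mul_sum, Finset.sum_sub_distrib, Finset.sum_const, Finset.card_univ]
        simp [nsmul_eq_mul] <;> ring
      have hBlt : (N:ℝ)*σ2 - ∑ i, (X i ω - μ)^2 < (N:ℝ)*(a*s) + L/12 := by
        have := hBω
        rw [hSB_def, Set.mem_setOf_eq, not_le, hsqrtB, hZBsum] at this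
        linarith
      -- variance decomposition
      have hNμh : (N:ℝ)*μh = ∑ i, X i ω := by rw [hμh_def]; field_simp
      have hdecomp : ∑ i, (X i ω - μ)^2 = (∑ i, (X i ω - μh)^2) + (N:ℝ)*c^2 := by
        have h1 : ∀ i : Fin N, (X i ω - μ)^2
            = (X i ω - μh)^2 + ((μh - μ)*(2*X i ω - μ - μh)) := fun i => by ring
        rw [Finset.sum_congr rfl (fun i _ => h1 i), Finset.sum_add_distrib, ← Finset.mul_sum]
        congr 1
        have h2 : ∑ i, (2*X i ω - μ - μh) = 2*(∑ i, X i ω) - (N:ℝ)*(μ + μh) := by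
          rw [show (fun i : Fin N => 2*X i ω - μ - μh) = (fun i => 2*X i ω - (μ + μh)) from
            funext fun i => by ring]
          rw [Finset.sum_sub_distrib, ← Finset.mul_sum, Finset.sum_const, Finset.card_univ]
          simp [nsmul_eq_mul] <;> ring
        rw [h2, ← hNμh, hc_def]
        ring
      have hc2 : s^2 ≤ vv^2 + c^2 + a*s + b/4 := by
        have hb4 : L/12 = (N:ℝ)*(b/4) := by rw [hb_def]; field_simp; ring
        have hσh2N : (N:ℝ)*σh2 = ∑ i, (X i ω - μh)^2 := by rw [hσh2_def]; field_simp
        have hsum' : ∑ i, (X i ω - μ)^2 = (N:ℝ)*σh2 + (N:ℝ)*c^2 := by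
          rw [hdecomp, ← hσh2N]
        have e1 : (N:ℝ)*(σ2 - (σh2 + c^2)) = (N:ℝ)*σ2 - ((N:ℝ)*σh2 + (N:ℝ)*c^2) := by ring
        have e2 : (N:ℝ)*(a*s + b/4) = (N:ℝ)*(a*s) + (N:ℝ)*(b/4) := by ring
        have hBlt' : (N:ℝ)*σ2 - ((N:ℝ)*σh2 + (N:ℝ)*c^2) < (N:ℝ)*(a*s) + L/12 := by
          rw [← hsum']; exact hBlt
        have h3 : (N:ℝ)*(σ2 - (σh2 + c^2)) < (N:ℝ)*(a*s + b/4) := by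
          rw [e1, e2, ← hb4]
          exact hBlt'
        have hdiv : σ2 - (σh2 + c^2) < a*s + b/4 := lt_of_mul_lt_mul_left h3 (le_of_lt hNR)
        rw [hs2, hvv2]
        linarith
      -- algebra
      have hfin := eb_alg a b s c vv hb ha6b ha0 hs0 hshalf hvv0 (le_of_lt hc1) hc2
      -- conclude ω ∈ E
      have hsqrtE : Real.sqrt (2 * σh2 * L / N) = a * vv := by
        rw [show 2 * σh2 * L / (N:ℝ) = (a*vv)^2 by rw [mul_pow, ha2, hvv2]; field_simp]
        exact Real.sqrt_sq (by positivity)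
      have h9b : 9*b = 3*L/(N:ℝ) := by rw [hb_def]; field_simp; ring
      show μ ≤ _
      have : μ ≤ μh + a*vv + 9*b := by rw [hc_def] at hfin; linarith
      rw [← hμh_def, ← hσh2_def, hsqrtE, ← h9b]
      linarith
    -- assemble
    have hPEc : P Eᶜ ≤ ENNReal.ofReal (δ/3) + ENNReal.ofReal (δ/3) := by
      calc P Eᶜ ≤ P (SA ∪ SB) := measure_mono hincl
        _ ≤ P SA + P SB := measure_union_le _ _
        _ ≤ ENNReal.ofReal (Real.exp (-L)) + ENNReal.ofReal (Real.exp (-L)) := add_le_add hA hB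
        _ = ENNReal.ofReal (δ/3) + ENNReal.ofReal (δ/3) := by rw [hexpL]
    have h1 : (1:ENNReal) ≤ P E + P Eᶜ := by
      rw [← measure_univ (μ := P), ← Set.union_compl_self E]
      exact measure_union_le _ _
    have h2 : ENNReal.ofReal (1-δ) + P Eᶜ ≤ 1 := by
      calc ENNReal.ofReal (1-δ) + P Eᶜ
          ≤ ENNReal.ofReal (1-δ) + (ENNReal.ofReal (δ/3) + ENNReal.ofReal (δ/3)) :=
            add_le_add le_rfl hPEc
        _ = ENNReal.ofReal ((1-δ) + (δ/3 + δ/3)) := by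
            rw [← ENNReal.ofReal_add (by positivity) (by positivity),
              ← ENNReal.ofReal_add (by linarith) (by positivity)]
        _ ≤ 1 := ENNReal.ofReal_le_one.2 (by linarith)
    exact (ENNReal.add_le_add_iff_right (measure_ne_top P _)).mp (h2.trans h1)
end

section
/- Let X_1, ..., X_N (with N ≥ 1) be i.i.d. random variables taking values in [0,1] with common mean μ. Let μ̂ = (1/N)·Σ_{i=1}^N X_i denote the empirical mean and σ̂² = (1/N)·Σ_{i=1}^N (X_i − μ̂)² the empirical variance. Then for every δ ∈ (0,1), with probability at least 1 − δ, μ ≥ μ̂ − sqrt(2·σ̂²·ln(3/δ)/N) − 3·ln(3/δ)/N. -/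
set_option maxHeartbeats 2000000

open MeasureTheory ProbabilityTheory

section EmpiricalBernsteinAux
open Real Set

lemma exp_le_quad_of_nonpos {x : ℝ} (hx : x ≤ 0) : exp x ≤ 1 + x + x^2/2 := by
  have hy : 0 ≤ -x := by linarith
  have hsum : 1 + (-x) + (-x)^2/2 ≤ exp (-x) := by
    have := Real.sum_le_exp_of_nonneg hy 3
    simp [Finset.sum_range_succ] at this
    convert this using 1
    ring
  have h1 : exp x = 1 / exp (-x) := by rw [Real.exp_neg]; field_simp
  rw [h1, div_le_iff₀ (by positivity)]
  have h2 : (1:ℝ) ≤ (1 + x + x^2/2) * (1 + (-x) + (-x)^2/2) := by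
    nlinarith [sq_nonneg x, sq_nonneg (x^2)]
  calc (1:ℝ) ≤ (1 + x + x^2/2) * (1 + (-x) + (-x)^2/2) := h2
    _ ≤ (1 + x + x^2/2) * exp (-x) := by
        apply mul_le_mul_of_nonneg_left hsum
        nlinarith

-- h'' step: fun x => 1 + (x-1)*exp x is monotone on [0,∞), value 0 at 0
lemma aux_h' {x : ℝ} (hx : 0 ≤ x) : 0 ≤ 1 + (x - 1) * exp x := by
  have hd : ∀ y : ℝ, HasDerivAt (fun z => 1 + (z - 1) * exp z) (y * exp y) y := by
    intro y
    have h1 : HasDerivAt (fun z : ℝ => z - 1) 1 y := (hasDerivAt_id y).sub_const 1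
    have := (h1.mul (Real.hasDerivAt_exp y)).const_add 1
    refine this.congr_deriv ?_
    ring
  have hmono : MonotoneOn (fun z : ℝ => 1 + (z - 1) * exp z) (Ici 0) := by
    apply monotoneOn_of_deriv_nonneg (convex_Ici 0)
    · exact (Continuous.continuousOn (by continuity))
    · intro y _; exact (hd y).differentiableAt.differentiableWithinAt
    · intro y hy
      rw [(hd y).deriv]
      rw [interior_Ici] at hy
      have : (0:ℝ) < y := hy
      positivity
  have h0 : (fun z : ℝ => 1 + (z - 1) * exp z) 0 = 0 := by simp
  have := hmono (self_mem_Ici) (mem_Ici.2 hx) hx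
  simpa [h0] using this

lemma aux_h {x : ℝ} (hx : 0 ≤ x) : 0 ≤ x + 2 + (x - 2) * exp x := by
  have hd : ∀ y : ℝ, HasDerivAt (fun z => z + 2 + (z - 2) * exp z) (1 + (y - 1) * exp y) y := by
    intro y
    have h1 : HasDerivAt (fun z : ℝ => z + 2) 1 y := (hasDerivAt_id y).add_const 2
    have h2 : HasDerivAt (fun z : ℝ => z - 2) 1 y := (hasDerivAt_id y).sub_const 2
    have := h1.add (h2.mul (Real.hasDerivAt_exp y))
    refine this.congr_deriv ?_
    ring
  have hmono : MonotoneOn (fun z : ℝ => z + 2 + (z - 2) * exp z) (Ici 0) := by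
    apply monotoneOn_of_deriv_nonneg (convex_Ici 0)
    · exact (Continuous.continuousOn (by continuity))
    · intro y _; exact (hd y).differentiableAt.differentiableWithinAt
    · intro y hy
      rw [(hd y).deriv, interior_Ici] at *
      exact aux_h' (le_of_lt hy)
  have := hmono (self_mem_Ici) (mem_Ici.2 hx) hx
  simpa using this

lemma quad_of_exp_nonneg {x : ℝ} (hx : 0 ≤ x) : (1 - x/3) * (exp x - 1 - x) ≤ x^2/2 := by
  have hd : ∀ y : ℝ, HasDerivAt (fun z => z^2/2 - (1 - z/3) * (exp z - 1 - z))
      ((y + 2 + (y - 2) * exp y)/3) y := by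
    intro y
    have h1 : HasDerivAt (fun z : ℝ => z^2/2) y y := by
      simpa using (hasDerivAt_pow 2 y).div_const 2
    have h2 : HasDerivAt (fun z : ℝ => 1 - z/3) (-(1/3)) y := by
      simpa using ((hasDerivAt_id y).div_const 3).const_sub 1
    have h3 : HasDerivAt (fun z : ℝ => exp z - 1 - z) (exp y - 1) y := by
      exact ((Real.hasDerivAt_exp y).sub_const 1).sub (hasDerivAt_id y)
    have := h1.sub (h2.mul h3)
    refine this.congr_deriv ?_
    ring
  have hmono : MonotoneOn (fun z : ℝ => z^2/2 - (1 - z/3) * (exp z - 1 - z)) (Ici 0) := by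
    apply monotoneOn_of_deriv_nonneg (convex_Ici 0)
    · exact (Continuous.continuousOn (by continuity))
    · intro y _; exact (hd y).differentiableAt.differentiableWithinAt
    · intro y hy
      rw [(hd y).deriv, interior_Ici] at *
      have := aux_h (le_of_lt hy)
      linarith
  have := hmono (self_mem_Ici) (mem_Ici.2 hx) hx
  simp only [ne_eq, OfNat.ofNat_ne_zero, not_false_eq_true, zero_pow, zero_div, exp_zero] at this
  nlinarith [this]

lemma exp_le_quad {x a : ℝ} (hxa : x ≤ a) (ha3 : a < 3) (ha0 : 0 ≤ a) :
    exp x ≤ 1 + x + x^2 / (2 * (1 - a/3)) := by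
  have hden : (0:ℝ) < 1 - a/3 := by linarith
  rcases le_or_gt x 0 with hx | hx
  · have h := exp_le_quad_of_nonpos hx
    have : x^2/2 ≤ x^2 / (2 * (1 - a/3)) := by
      apply div_le_div_of_nonneg_left (sq_nonneg x) (by positivity)
      nlinarith
    linarith
  · have hq := quad_of_exp_nonneg hx.le
    have h1 : (0:ℝ) < 1 - x/3 := by linarith
    have h2 : 0 ≤ exp x - 1 - x := by have := Real.add_one_le_exp x; linarith
    have h3 : exp x - 1 - x ≤ x^2 / (2 * (1 - x/3)) := by
      rw [le_div_iff₀ (by positivity)]; nlinarith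
    have h4 : x^2 / (2 * (1 - x/3)) ≤ x^2 / (2 * (1 - a/3)) := by
      apply div_le_div_of_nonneg_left (sq_nonneg x) (by positivity)
      nlinarith
    linarith

variable {Ω : Type*} [MeasurableSpace Ω] {P : Measure Ω} [IsProbabilityMeasure P]

lemma integrable_of_bounded {f : Ω → ℝ} (hf : Measurable f) (C : ℝ) (h : ∀ ω, |f ω| ≤ C) :
    Integrable f P :=
  (integrable_const C).mono' hf.aestronglyMeasurable (ae_of_all _ h)

lemma mgf_le_bernstein {W : Ω → ℝ} (hW : Measurable W) {b v l : ℝ}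
    (hb : 0 < b) (hl : 0 < l) (hlb : l * b < 3)
    (hub : ∀ ω, W ω ≤ b) (hlow : ∀ ω, -1 ≤ W ω)
    (hmean : ∫ ω, W ω ∂P = 0) (hvar : ∫ ω, (W ω)^2 ∂P ≤ v) :
    mgf W P l ≤ exp (v * l^2 / (2 * (1 - l*b/3))) := by
  set K : ℝ := 2 * (1 - l*b/3) with hK
  have hKpos : 0 < K := by rw [hK]; nlinarith
  have hC : ∀ ω, |W ω| ≤ max 1 b := by
    intro ω
    rw [abs_le]
    constructor
    · linarith [hlow ω, le_max_left (1:ℝ) b]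
    · linarith [hub ω, le_max_right (1:ℝ) b]
  have hintW : Integrable W P := integrable_of_bounded (P := P) hW _ hC
  have hintW2 : Integrable (fun ω => (W ω)^2) P := by
    apply integrable_of_bounded (P := P) (hW.pow_const 2) ((max 1 b)^2)
    intro ω
    rw [abs_le]
    constructor
    · nlinarith [sq_nonneg (W ω), sq_nonneg (max 1 b)]
    · calc (W ω)^2 = |W ω|^2 := (sq_abs _).symm
        _ ≤ (max 1 b)^2 := by
          apply pow_le_pow_left₀ (abs_nonneg _) (hC ω)
  have hptw : ∀ ω, exp (l * W ω) ≤ 1 + l * W ω + (l^2/K) * (W ω)^2 := by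
    intro ω
    have h := exp_le_quad (x := l * W ω) (a := l * b)
      (by nlinarith [hub ω]) hlb (by positivity)
    calc exp (l * W ω) ≤ 1 + l * W ω + (l * W ω)^2 / K := h
      _ = 1 + l * W ω + (l^2/K) * (W ω)^2 := by ring
  have hint_exp : Integrable (fun ω => exp (l * W ω)) P := by
    apply integrable_of_bounded (P := P) (hW.const_mul l).exp (exp (l * b))
    intro ω
    rw [abs_of_pos (exp_pos _), Real.exp_le_exp]
    exact mul_le_mul_of_nonneg_left (hub ω) hl.le
  have hint_rhs : Integrable (fun ω => 1 + l * W ω + (l^2/K) * (W ω)^2) P :=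
    ((integrable_const 1).add (hintW.const_mul l)).add (hintW2.const_mul (l^2/K))
  have h1 : mgf W P l ≤ ∫ ω, (1 + l * W ω + (l^2/K) * (W ω)^2) ∂P := by
    apply integral_mono hint_exp hint_rhs hptw
  have h2 : ∫ ω, (1 + l * W ω + (l^2/K) * (W ω)^2) ∂P
      = 1 + (l^2/K) * ∫ ω, (W ω)^2 ∂P := by
    have e1 : ∫ ω, (1 + l * W ω + (l^2/K) * (W ω)^2) ∂P
        = (∫ ω, (1 + l * W ω) ∂P) + ∫ ω, (l^2/K) * (W ω)^2 ∂P :=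
      integral_add ((integrable_const 1).add (hintW.const_mul l)) (hintW2.const_mul (l^2/K))
    have e2 : ∫ ω, (1 + l * W ω) ∂P = (∫ _ω, (1:ℝ) ∂P) + ∫ ω, l * W ω ∂P :=
      integral_add (integrable_const 1) (hintW.const_mul l)
    rw [e1, e2, MeasureTheory.integral_const_mul, MeasureTheory.integral_const_mul, hmean, integral_const]
    simp
  have h3 : 1 + (l^2/K) * ∫ ω, (W ω)^2 ∂P ≤ 1 + (l^2/K) * v := by
    have : (0:ℝ) ≤ l^2/K := by positivity
    nlinarith
  have h4 : 1 + (l^2/K) * v ≤ exp ((l^2/K) * v) := by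
    have := Real.add_one_le_exp ((l^2/K) * v)
    linarith
  have : v * l^2 / K = (l^2/K) * v := by ring
  rw [hK] at *
  rw [this]
  linarith

lemma eb_algebra {e v S t : ℝ} (he : 0 < e) (hv : 0 < v) (hv4 : v ≤ 1/4) (hS : 0 ≤ S)
    (hA : t < e + Real.sqrt (e^2 + 6*e*v))
    (hB : v - (S + t^2) < e/4 + Real.sqrt (e^2/16 + 6*e*v)) :
    t ≤ Real.sqrt (6*e*S) + 9*e := by
  by_contra hcon
  push_neg at hcon
  have hsq0 : 0 ≤ Real.sqrt (6*e*S) := Real.sqrt_nonneg _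
  have ht9 : 9*e < t := by linarith
  have ht0 : 0 < t := by linarith
  have h6eS : 6*e*S < (t - 9*e)^2 :=
    (Real.sqrt_lt' (show 0 < t - 9*e by linarith)).1 (by linarith)
  set rA := Real.sqrt (e^2 + 6*e*v) with hrA_def
  have hrA0 : 0 ≤ rA := Real.sqrt_nonneg _
  have hrA2 : rA^2 = e^2 + 6*e*v := Real.sq_sqrt (by positivity)
  have hAv : t^2 - 2*e*t ≤ 6*e*v := by
    have h1 : t - e < rA := by linarith
    nlinarith [mul_nonneg (show (0:ℝ) ≤ rA - (t-e) by linarith)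
      (show (0:ℝ) ≤ rA + (t-e) by linarith)]
  rcases le_or_gt (1/42 : ℝ) e with hce | hce
  · have h64 : e^2 + 6*e*v ≤ (8*e)^2 := by nlinarith
    have : rA ≤ 8*e := by
      calc rA ≤ Real.sqrt ((8*e)^2) := Real.sqrt_le_sqrt h64
        _ = 8*e := Real.sqrt_sq (by linarith)
    linarith
  · have h15 : 6*e*v ≤ 1.5*e := by nlinarith
    have hq : t^2 ≤ 2*e*t + 1.5*e := by linarith
    have ht14 : t < 3/14 := by
      by_contra h14
      push_neg at h14
      nlinarith [mul_lt_mul_of_pos_left hce ht0, mul_le_mul_of_nonneg_left h14 ht0.le]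
    set rB := Real.sqrt (e^2/16 + 6*e*v) with hrB_def
    have hrB0 : 0 ≤ rB := Real.sqrt_nonneg _
    have hrB2 : rB^2 = e^2/16 + 6*e*v := Real.sq_sqrt (by positivity)
    have harg : 0 ≤ e^2/16 + (t^2 - 2*e*t) := by nlinarith
    set r0 := Real.sqrt (e^2/16 + (t^2 - 2*e*t)) with hr0_def
    have hr00 : 0 ≤ r0 := Real.sqrt_nonneg _
    have hr02 : r0^2 = e^2/16 + (t^2 - 2*e*t) := Real.sq_sqrt harg
    have hr0t : r0 ≤ t - e := by
      calc r0 ≤ Real.sqrt ((t-e)^2) := Real.sqrt_le_sqrt (by nlinarith)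
        _ = t - e := Real.sqrt_sq (by linarith)
    have hq9 : 0 < (t-9*e)*(t+7*e) :=
      mul_pos (show (0:ℝ) < t-9*e by linarith) (show (0:ℝ) < t+7*e by linarith)
    have hr0ge : 6*e ≤ r0 := by
      calc (6:ℝ)*e = Real.sqrt ((6*e)^2) := (Real.sqrt_sq (by linarith)).symm
        _ ≤ r0 := Real.sqrt_le_sqrt (by nlinarith [hq9])
    have hrBr0 : 6*e*rB ≤ 6*e*r0 + (6*e*v - (t^2 - 2*e*t)) := by
      rcases le_or_gt rB r0 with h | h
      · nlinarith
      · have h1 : (rB - r0) * (6*e) ≤ (rB - r0) * (rB + r0) :=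
          mul_le_mul_of_nonneg_left (by linarith) (by linarith)
        nlinarith [h1]
    have hSgt : S > v - t^2 - e/4 - rB := by linarith
    have k1 : 6*e*S > 6*e*v - 6*e*t^2 - 1.5*e^2 - 6*e*rB := by nlinarith
    have k3 : 6*e*r0 ≤ 6*e*t - 6*e^2 := by nlinarith [mul_le_mul_of_nonneg_left hr0t (show (0:ℝ) ≤ 6*e by linarith)]
    have h6 : 6*e*S > t^2 - 8*e*t - 6*e*t^2 + 4.5*e^2 := by linarith
    have h10 : 10*(e*t) < 6*(e*t^2) + 76.5*e^2 := by nlinarith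
    have h10' : 10*t < 6*t^2 + 76.5*e := by
      have := (mul_lt_mul_iff_right₀ he).1 (show e*(10*t) < e*(6*t^2+76.5*e) by ring_nf; ring_nf at h10; linarith)
      linarith
    nlinarith [mul_lt_mul_of_pos_left ht14 (show (0:ℝ) < 6*t by linarith)]

-- sum identity
lemma sum_sq_identity {N : ℕ} (hN : (0:ℝ) < N) (f : Fin N → ℝ) (μ m : ℝ)
    (hm : m = (1/N) * ∑ i, f i) :
    (1/(N:ℝ)) * ∑ i, (f i - μ)^2 = (1/N) * ∑ i, (f i - m)^2 + (m - μ)^2 := by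
  have hsum : ∑ i, f i = (N:ℝ) * m := by rw [hm]; field_simp
  have h1 : ∑ i, (f i - μ)^2 - ∑ i, (f i - m)^2 = ∑ i, ((m-μ)*(2*f i - μ - m)) := by
    rw [← Finset.sum_sub_distrib]
    apply Finset.sum_congr rfl
    intros; ring
  have h2 : ∑ i, ((m-μ)*(2*f i - μ - m)) = (m-μ)*(2*((N:ℝ)*m) - N*(μ+m)) := by
    rw [← Finset.mul_sum]
    congr 1
    have : ∑ i : Fin N, (2*f i - μ - m) = 2*(∑ i, f i) - N*(μ+m) := by
      simp [Finset.sum_sub_distrib, Finset.mul_sum, Finset.sum_const, Finset.card_univ]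
      ring
    rw [this, hsum]
  have h3 : ∑ i, (f i - μ)^2 = ∑ i, (f i - m)^2 + (N:ℝ)*(m-μ)^2 := by
    have := h1.trans h2
    nlinarith [this]
  rw [h3]
  field_simp


section
variable {Ω : Type*} [MeasurableSpace Ω] {P : Measure Ω} [IsProbabilityMeasure P]

lemma bernstein_tail (N : ℕ) (hN : 0 < N) (W : Fin N → Ω → ℝ)
    (hWmeas : ∀ i, Measurable (W i))
    (hindep : iIndepFun W P)
    {b v L : ℝ} (hb : 0 < b) (hv : 0 < v) (hL : 0 < L)
    (hub : ∀ i ω, W i ω ≤ b) (hlow : ∀ i ω, -1 ≤ W i ω)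
    (hmean : ∀ i, ∫ ω, W i ω ∂P = 0) (hvar : ∀ i, ∫ ω, (W i ω)^2 ∂P ≤ v) :
    P {ω | (N:ℝ) * (b*L/(3*N) + Real.sqrt ((b*L/(3*N))^2 + 2*v*L/N)) ≤ ∑ i, W i ω}
      ≤ ENNReal.ofReal (Real.exp (-L)) := by
  have hNR : (0:ℝ) < N := Nat.cast_pos.2 hN
  set c : ℝ := b*L/(3*N) with hc_def
  have hc : 0 < c := by positivity
  set r : ℝ := Real.sqrt (c^2 + 2*v*L/N) with hr_def
  have hr0 : 0 ≤ r := Real.sqrt_nonneg _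
  have hr2 : r^2 = c^2 + 2*v*L/N := Real.sq_sqrt (by positivity)
  set s : ℝ := c + r with hs_def
  have hs : 0 < s := by positivity
  have key : (N:ℝ) * s^2 = (2*b*L/3)*s + 2*L*v := by
    have h1 : s^2 = 2*c*s + 2*v*L/N := by
      have : s^2 = c^2 + 2*c*r + r^2 := by rw [hs_def]; ring
      rw [this, hr2]; ring
    have h2 : (N:ℝ) * c = b*L/3 := by
      rw [hc_def]; field_simp
    calc (N:ℝ) * s^2 = 2*((N:ℝ)*c)*s + (N:ℝ)*(2*v*L/N) := by rw [h1]; ring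
      _ = (2*b*L/3)*s + 2*L*v := by rw [h2]; field_simp
  set l : ℝ := 3*s/(3*v+b*s) with hl_def
  have hden : 0 < 3*v + b*s := by positivity
  have hl : 0 < l := by positivity
  have hlb : l * b < 3 := by
    rw [hl_def, div_mul_eq_mul_div, div_lt_iff₀ hden]
    nlinarith
  have hKl : 1 - l*b/3 = 3*v/(3*v+b*s) := by
    rw [hl_def]; field_simp; ring
  -- mgf bound per component
  have hmgf : ∀ i, mgf (W i) P l ≤ exp (v * l^2 / (2 * (1 - l*b/3))) := fun i =>
    mgf_le_bernstein (hWmeas i) hb hl hlb (hub i) (hlow i) (hmean i) (hvar i)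
  have hint : ∀ i : Fin N, Integrable (fun ω => exp (l * W i ω)) P := by
    intro i
    apply (integrable_const (exp (l * b))).mono'
      ((hWmeas i).const_mul l).exp.aestronglyMeasurable
    apply ae_of_all
    intro ω
    rw [Real.norm_eq_abs, abs_of_pos (exp_pos _), Real.exp_le_exp]
    exact mul_le_mul_of_nonneg_left (hub i ω) hl.le
  have hint_sum : Integrable (fun ω => exp (l * (∑ i, W i) ω)) P :=
    hindep.integrable_exp_mul_sum hWmeas (fun i _ => hint i)
  have hcher := measure_ge_le_exp_mul_mgf (X := ∑ i, W i) (μ := P) ((N:ℝ)*s) hl.le hint_sum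
  have hmgfsum : mgf (∑ i, W i) P l ≤ exp ((N:ℝ) * (v * l^2 / (2 * (1 - l*b/3)))) := by
    rw [hindep.mgf_sum hWmeas]
    calc ∏ i, mgf (W i) P l ≤ ∏ _i : Fin N, exp (v * l^2 / (2 * (1 - l*b/3))) :=
          Finset.prod_le_prod (fun i _ => mgf_nonneg) (fun i _ => hmgf i)
      _ = exp ((N:ℝ) * (v * l^2 / (2 * (1 - l*b/3)))) := by
          rw [Finset.prod_const, ← Real.exp_nat_mul]
          simp
  have hexp_le : -l * ((N:ℝ)*s) + (N:ℝ) * (v * l^2 / (2 * (1 - l*b/3))) ≤ -L := by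
    have hdne : (3*v+b*s) ≠ 0 := ne_of_gt hden
    have e1 : v * l^2 / (2 * (1 - l*b/3)) = 3*s^2/(2*(3*v+b*s)) := by
      rw [hKl, hl_def]; field_simp
    have e3 : -l * ((N:ℝ)*s) + (N:ℝ) * (v * l^2 / (2 * (1 - l*b/3)))
        = -((3*((N:ℝ)*s^2)) / (2*(3*v+b*s))) := by
      rw [e1, hl_def]; field_simp; ring
    rw [e3, key]
    have e4 : (3*((2*b*L/3)*s + 2*L*v)) = L*(2*(3*v+b*s)) := by ring
    rw [e4, mul_div_assoc, div_self (by positivity : (2*(3*v+b*s)) ≠ 0), mul_one]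
  have htoreal : (P {ω | (N:ℝ)*s ≤ (∑ i, W i) ω}).toReal ≤ exp (-L) := by
    calc (P {ω | (N:ℝ)*s ≤ (∑ i, W i) ω}).toReal
        ≤ exp (-l * ((N:ℝ)*s)) * mgf (∑ i, W i) P l := hcher
      _ ≤ exp (-l * ((N:ℝ)*s)) * exp ((N:ℝ) * (v * l^2 / (2 * (1 - l*b/3)))) := by
          exact mul_le_mul_of_nonneg_left hmgfsum (exp_pos _).le
      _ = exp (-l * ((N:ℝ)*s) + (N:ℝ) * (v * l^2 / (2 * (1 - l*b/3)))) := (Real.exp_add _ _).symm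
      _ ≤ exp (-L) := Real.exp_le_exp.2 hexp_le
  have hset : {ω | (N:ℝ) * s ≤ ∑ i, W i ω} = {ω | (N:ℝ)*s ≤ (∑ i, W i) ω} := by
    ext ω; simp [Finset.sum_apply]
  rw [hset]
  calc P {ω | (N:ℝ)*s ≤ (∑ i, W i) ω}
      = ENNReal.ofReal ((P {ω | (N:ℝ)*s ≤ (∑ i, W i) ω}).toReal) := by
        rw [ENNReal.ofReal_toReal (measure_ne_top _ _)]
    _ ≤ ENNReal.ofReal (exp (-L)) := ENNReal.ofReal_le_ofReal htoreal
end

end EmpiricalBernsteinAux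

/-- Empirical Bernstein (one-sided lower) inequality: for i.i.d. random variables
`X 1, ..., X N` with values in `[0,1]` and common mean `μ`, with probability at least
`1 - δ` we have `μ ≥ μ̂ - sqrt (2 σ̂² ln(3/δ) / N) - 3 ln(3/δ) / N`, where `μ̂` is the
empirical mean and `σ̂²` the empirical variance. -/
theorem empirical_bernstein_lower
    {Ω : Type*} [MeasurableSpace Ω] (P : Measure Ω) [IsProbabilityMeasure P]
    (N : ℕ) (hN : 1 ≤ N) (X : Fin N → Ω → ℝ) (μ : ℝ)
    (hmeas : ∀ i, Measurable (X i))
    (hindep : iIndepFun X P)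
    (hident : ∀ i j, IdentDistrib (X i) (X j) P P)
    (hbound : ∀ i ω, X i ω ∈ Set.Icc (0 : ℝ) 1)
    (hmean : ∀ i, ∫ ω, X i ω ∂P = μ)
    (δ : ℝ) (hδ : δ ∈ Set.Ioo (0 : ℝ) 1) :
    ENNReal.ofReal (1 - δ) ≤
      P {ω | μ ≥ (1 / N) * ∑ i, X i ω
          - Real.sqrt (2 * ((1 / N) * ∑ i, (X i ω - (1 / N) * ∑ j, X j ω) ^ 2)
              * Real.log (3 / δ) / N)
          - 3 * Real.log (3 / δ) / N} := by
  have hNpos : 0 < N := hN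
  have hNR : (0:ℝ) < N := by exact_mod_cast hNpos
  set L : ℝ := Real.log (3/δ) with hL_def
  have hδ0 : 0 < δ := hδ.1
  have hδ1 : δ < 1 := hδ.2
  have hL : 0 < L := Real.log_pos (by rw [lt_div_iff₀ hδ0]; linarith)
  set T := {ω | μ ≥ (1 / (N:ℝ)) * ∑ i, X i ω
          - Real.sqrt (2 * ((1 / N) * ∑ i, (X i ω - (1 / N) * ∑ j, X j ω) ^ 2) * L / N)
          - 3 * L / N} with hT_def
  -- basic facts
  have hint : ∀ i, Integrable (X i) P := by
    intro i
    apply (integrable_const (1:ℝ)).mono' (hmeas i).aestronglyMeasurable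
    apply ae_of_all
    intro ω
    rw [Real.norm_eq_abs, abs_le]
    constructor <;> [linarith [(hbound i ω).1]; exact (hbound i ω).2]
  have i0 : Fin N := ⟨0, hNpos⟩
  have hμ0 : 0 ≤ μ := by
    rw [← hmean i0]
    exact integral_nonneg (fun ω => (hbound i0 ω).1)
  have hμ1 : μ ≤ 1 := by
    rw [← hmean i0]
    calc ∫ ω, X i0 ω ∂P ≤ ∫ _ω, (1:ℝ) ∂P :=
          integral_mono (hint i0) (integrable_const 1) (fun ω => (hbound i0 ω).2)
      _ = 1 := by simp
  -- the centered squares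
  have hYint : ∀ i, Integrable (fun ω => (X i ω - μ)^2) P := by
    intro i
    apply (integrable_const (1:ℝ)).mono' (((hmeas i).sub_const μ).pow_const 2).aestronglyMeasurable
    apply ae_of_all
    intro ω
    rw [Real.norm_eq_abs, abs_le]
    constructor <;> nlinarith [(hbound i ω).1, (hbound i ω).2, sq_nonneg (X i ω - μ)]
  set v : ℝ := ∫ ω, (X i0 ω - μ)^2 ∂P with hv_def
  have hvar_i : ∀ i, ∫ ω, (X i ω - μ)^2 ∂P = v := by
    intro i
    rw [hv_def]
    have h := (hident i i0).comp (u := fun x => (x - μ)^2)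
      ((measurable_id.sub_const μ).pow_const 2)
    exact h.integral_eq
  have hv_nonneg : 0 ≤ v := integral_nonneg (fun ω => sq_nonneg _)
  rcases eq_or_lt_of_le hv_nonneg with hv0 | hvpos
  · -- degenerate case : X i = μ a.s.
    have hae : ∀ᵐ ω ∂P, ∀ i, X i ω = μ := by
      rw [ae_all_iff]
      intro i
      have h0 : ∫ ω, (X i ω - μ)^2 ∂P = 0 := by rw [hvar_i i, ← hv0]
      have h0' := (integral_eq_zero_iff_of_nonneg (fun ω => sq_nonneg (X i ω - μ)) (hYint i)).1 h0
      filter_upwards [h0'] with ω hω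
      have h1 : (X i ω - μ)^2 = 0 := hω
      have h2 := pow_eq_zero_iff (n := 2) (by norm_num) |>.1 h1
      linarith [sub_eq_zero.1 h2]
    have hsub : {ω | ∀ i, X i ω = μ} ⊆ T := by
      intro ω hω
      have hω' : ∀ i, X i ω = μ := hω
      simp only [hT_def, Set.mem_setOf_eq, ge_iff_le]
      have h1 : ∑ i, X i ω = (N:ℝ) * μ := by
        rw [Finset.sum_congr rfl (fun i _ => hω' i)]
        simp [Finset.card_univ, mul_comm]
      have h2 : (1/(N:ℝ)) * ∑ i, X i ω = μ := by rw [h1]; field_simp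
      rw [h2]
      have h3 : 0 ≤ Real.sqrt (2 * ((1 / N) * ∑ i, (X i ω - μ) ^ 2) * L / N) := Real.sqrt_nonneg _
      have h4 : 0 < 3 * L / (N:ℝ) := by positivity
      linarith
    have hone : P {ω | ∀ i, X i ω = μ} = 1 := by
      rw [← measure_univ (μ := P)]
      apply measure_congr
      filter_upwards [hae] with ω hω
      show ({ω | ∀ i, X i ω = μ} ω) = (Set.univ ω)
      change (∀ i, X i ω = μ) = True
      rw [eq_iff_iff]
      constructor
      · intro _; trivial
      · intro _; exact hω
    calc ENNReal.ofReal (1 - δ) ≤ 1 := ENNReal.ofReal_le_one.2 (by linarith)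
      _ = P {ω | ∀ i, X i ω = μ} := hone.symm
      _ ≤ P T := measure_mono hsub
  · -- main case : v > 0
    set e : ℝ := L/(3*N) with he_def
    have he : 0 < e := by positivity
    -- variance bound v ≤ 1/4
    have hXsq_int : Integrable (fun ω => (X i0 ω)^2) P := by
      apply (integrable_const (1:ℝ)).mono' ((hmeas i0).pow_const 2).aestronglyMeasurable
      apply ae_of_all; intro ω
      rw [Real.norm_eq_abs, abs_le]
      constructor <;> nlinarith [(hbound i0 ω).1, (hbound i0 ω).2]
    have hvexp : v = (∫ ω, (X i0 ω)^2 ∂P) - μ^2 := by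
      rw [hv_def]
      have h1 : (fun ω => (X i0 ω - μ)^2) = fun ω => (X i0 ω)^2 - (2*μ)*X i0 ω + μ^2 := by
        funext ω; ring
      have e1 : ∫ ω, ((X i0 ω)^2 - (2*μ)*X i0 ω + μ^2) ∂P
          = (∫ ω, ((X i0 ω)^2 - (2*μ)*X i0 ω) ∂P) + ∫ _ω, (μ^2 : ℝ) ∂P :=
        integral_add (hXsq_int.sub ((hint i0).const_mul (2*μ))) (integrable_const _)
      have e2 : ∫ ω, ((X i0 ω)^2 - (2*μ)*X i0 ω) ∂P
          = (∫ ω, (X i0 ω)^2 ∂P) - ∫ ω, (2*μ)*X i0 ω ∂P :=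
        integral_sub hXsq_int ((hint i0).const_mul (2*μ))
      rw [h1, e1, e2, MeasureTheory.integral_const_mul, hmean i0, integral_const]
      simp
      ring
    have hsq_le : ∫ ω, (X i0 ω)^2 ∂P ≤ μ := by
      rw [← hmean i0]
      apply integral_mono hXsq_int (hint i0)
      intro ω
      show (X i0 ω)^2 ≤ X i0 ω
      nlinarith [(hbound i0 ω).1, (hbound i0 ω).2]
    have hv4 : v ≤ 1/4 := by nlinarith [hvexp, hsq_le, sq_nonneg (2*μ - 1)]
    -- Event A
    set WA : Fin N → Ω → ℝ := fun i ω => X i ω - μ with hWA_def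
    have hWAmeas : ∀ i, Measurable (WA i) := fun i => (hmeas i).sub_const μ
    have hWAindep : iIndepFun WA P :=
      hindep.comp (fun _ => fun x : ℝ => x - μ) (fun _ => measurable_id.sub_const μ)
    have hA := bernstein_tail N hNpos WA hWAmeas hWAindep (b := 1) (v := v) (L := L) one_pos
      hvpos hL
      (fun i ω => by have := (hbound i ω).2; simp only [hWA_def]; linarith)
      (fun i ω => by have := (hbound i ω).1; simp only [hWA_def]; linarith)
      (fun i => by
        simp only [hWA_def]
        rw [integral_sub (hint i) (integrable_const μ), hmean i, integral_const]
        simp)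
      (fun i => le_of_eq (hvar_i i))
    -- Event B
    set WB : Fin N → Ω → ℝ := fun i ω => v - (X i ω - μ)^2 with hWB_def
    have hWBmeas : ∀ i, Measurable (WB i) :=
      fun i => measurable_const.sub (((hmeas i).sub_const μ).pow_const 2)
    have hWBindep : iIndepFun WB P :=
      hindep.comp (fun _ => fun x : ℝ => v - (x - μ)^2)
        (fun _ => measurable_const.sub ((measurable_id.sub_const μ).pow_const 2))
    have hY4int : ∀ i, Integrable (fun ω => ((X i ω - μ)^2)^2) P := by
      intro i
      apply (integrable_const (1:ℝ)).mono'
        ((((hmeas i).sub_const μ).pow_const 2).pow_const 2).aestronglyMeasurable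
      apply ae_of_all; intro ω
      rw [Real.norm_eq_abs, abs_le]
      have hb1 : (X i ω - μ)^2 ≤ 1 := by nlinarith [(hbound i ω).1, (hbound i ω).2, hμ0, hμ1]
      have hb0 : 0 ≤ (X i ω - μ)^2 := sq_nonneg _
      constructor <;> nlinarith [hb1, hb0]
    have hWBvar : ∀ i, ∫ ω, (WB i ω)^2 ∂P ≤ v := by
      intro i
      have h1 : (fun ω => (WB i ω)^2)
          = fun ω => ((X i ω - μ)^2)^2 - (2*v)*(X i ω - μ)^2 + v^2 := by
        funext ω; simp only [hWB_def]; ring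
      have e1 : ∫ ω, (((X i ω - μ)^2)^2 - (2*v)*(X i ω - μ)^2 + v^2) ∂P
          = (∫ ω, (((X i ω - μ)^2)^2 - (2*v)*(X i ω - μ)^2) ∂P) + ∫ _ω, (v^2 : ℝ) ∂P :=
        integral_add ((hY4int i).sub ((hYint i).const_mul (2*v))) (integrable_const _)
      have e2 : ∫ ω, (((X i ω - μ)^2)^2 - (2*v)*(X i ω - μ)^2) ∂P
          = (∫ ω, ((X i ω - μ)^2)^2 ∂P) - ∫ ω, (2*v)*(X i ω - μ)^2 ∂P :=
        integral_sub (hY4int i) ((hYint i).const_mul (2*v))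
      rw [h1, e1, e2, MeasureTheory.integral_const_mul, hvar_i i, integral_const]
      have h2 : ∫ ω, ((X i ω - μ)^2)^2 ∂P ≤ ∫ ω, (X i ω - μ)^2 ∂P := by
        apply integral_mono (hY4int i) (hYint i)
        intro ω
        show ((X i ω - μ)^2)^2 ≤ (X i ω - μ)^2
        have hb1 : (X i ω - μ)^2 ≤ 1 := by nlinarith [(hbound i ω).1, (hbound i ω).2, hμ0, hμ1]
        nlinarith [hb1, sq_nonneg (X i ω - μ)]
      rw [hvar_i i] at h2
      simp only [measure_univ, ENNReal.toReal_one, probReal_univ, smul_eq_mul, one_mul]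
      nlinarith
    have hB := bernstein_tail N hNpos WB hWBmeas hWBindep (b := 1/4) (v := v) (L := L)
      (by norm_num) hvpos hL
      (fun i ω => by
        have h1 := sq_nonneg (X i ω - μ)
        simp only [hWB_def]; linarith)
      (fun i ω => by
        have h1 : (X i ω - μ)^2 ≤ 1 := by nlinarith [(hbound i ω).1, (hbound i ω).2, hμ0, hμ1]
        simp only [hWB_def]; linarith)
      (fun i => by
        simp only [hWB_def]
        rw [integral_sub (integrable_const v) (hYint i), hvar_i i, integral_const]
        simp)
      hWBvar
    -- the two bad events
    set A := {ω | (N:ℝ) * (1*L/(3*N) + Real.sqrt ((1*L/(3*N))^2 + 2*v*L/N))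
        ≤ ∑ i, WA i ω} with hA_def
    set B := {ω | (N:ℝ) * ((1/4)*L/(3*N) + Real.sqrt (((1/4)*L/(3*N))^2 + 2*v*L/N))
        ≤ ∑ i, WB i ω} with hB_def
    have hAmeas : MeasurableSet A :=
      measurableSet_le measurable_const (Finset.measurable_sum _ (fun i _ => hWAmeas i))
    have hBmeas : MeasurableSet B :=
      measurableSet_le measurable_const (Finset.measurable_sum _ (fun i _ => hWBmeas i))
    -- inclusion
    have hsub : (A ∪ B)ᶜ ⊆ T := by
      intro ω hω
      simp only [Set.mem_compl_iff, Set.mem_union, not_or, hA_def, hB_def,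
        Set.mem_setOf_eq, not_le] at hω
      obtain ⟨hωA, hωB⟩ := hω
      simp only [hT_def, Set.mem_setOf_eq, ge_iff_le]
      set m : ℝ := 1/(N:ℝ) * ∑ j, X j ω with hm_def
      set S : ℝ := 1/(N:ℝ) * ∑ i, (X i ω - m)^2 with hS_def
      have hS : 0 ≤ S := by
        apply mul_nonneg (by positivity)
        exact Finset.sum_nonneg (fun i _ => sq_nonneg _)
      set t : ℝ := m - μ with ht_def
      -- rewrite event A
      have hsumA : ∑ i, WA i ω = (∑ i, X i ω) - (N:ℝ)*μ := by
        simp only [hWA_def]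
        simp [Finset.sum_sub_distrib, Finset.card_univ, nsmul_eq_mul]
      have hNt : (N:ℝ)*t = (∑ i, X i ω) - (N:ℝ)*μ := by
        rw [ht_def, hm_def]; field_simp
      have hargA : (1*L/(3*(N:ℝ)))^2 + 2*v*L/N = e^2 + 6*e*v := by
        rw [he_def]; field_simp; ring
      have heA : 1*L/(3*(N:ℝ)) = e := by rw [he_def]; ring
      rw [hargA, heA] at hωA
      have hAin : t < e + Real.sqrt (e^2 + 6*e*v) := by
        have h1 : (N:ℝ)*t < (N:ℝ)*(e + Real.sqrt (e^2 + 6*e*v)) := by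
          rw [hNt, ← hsumA]
          exact hωA
        exact lt_of_mul_lt_mul_left h1 hNR.le
      -- rewrite event B
      have hsumB : ∑ i, WB i ω = (N:ℝ)*v - ∑ i, (X i ω - μ)^2 := by
        simp only [hWB_def]
        simp [Finset.sum_sub_distrib, Finset.card_univ, nsmul_eq_mul]
      have hargB : ((1/4)*L/(3*(N:ℝ)))^2 + 2*v*L/N = e^2/16 + 6*e*v := by
        rw [he_def]; field_simp; ring
      have heB : (1/4)*L/(3*(N:ℝ)) = e/4 := by rw [he_def]; ring
      have hident2 : 1/(N:ℝ) * ∑ i, (X i ω - μ)^2 = S + t^2 := by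
        rw [hS_def, ht_def]
        exact sum_sq_identity hNR (fun i => X i ω) μ m hm_def
      have hBin : v - (S + t^2) < e/4 + Real.sqrt (e^2/16 + 6*e*v) := by
        have h1 : (N:ℝ)*(v - (S + t^2)) < (N:ℝ)*(e/4 + Real.sqrt (e^2/16 + 6*e*v)) := by
          have h2 : (N:ℝ)*(v - (S + t^2)) = (N:ℝ)*v - (N:ℝ)*(S + t^2) := by ring
          have h3 : (N:ℝ)*(S + t^2) = ∑ i, (X i ω - μ)^2 := by
            rw [← hident2]; field_simp
          rw [hargB, heB] at hωB
          rw [h2, h3, ← hsumB]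
          exact hωB
        exact lt_of_mul_lt_mul_left h1 hNR.le
      have halg := eb_algebra he hvpos hv4 hS hAin hBin
      -- convert to the goal
      have hgoal1 : 2 * S * L / (N:ℝ) = 6*e*S := by rw [he_def]; field_simp; ring
      have hgoal2 : 3 * L / (N:ℝ) = 9*e := by rw [he_def]; field_simp; ring
      have hgoal3 : 2 * (1/(N:ℝ) * ∑ i, (X i ω - m)^2) * L / N = 6*e*S := by
        rw [← hgoal1, hS_def]
      rw [hgoal3, hgoal2]
      linarith
    -- measure arithmetic
    have hexpδ : Real.exp (-L) = δ/3 := by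
      rw [hL_def, Real.exp_neg, Real.exp_log (by positivity), inv_div]
    rw [hexpδ] at hA hB
    have hunion : P (A ∪ B) ≤ ENNReal.ofReal (2*δ/3) := by
      calc P (A ∪ B) ≤ P A + P B := measure_union_le A B
        _ ≤ ENNReal.ofReal (δ/3) + ENNReal.ofReal (δ/3) := add_le_add hA hB
        _ = ENNReal.ofReal (2*δ/3) := by
            rw [← ENNReal.ofReal_add (by positivity) (by positivity)]
            congr 1; ring
    have hcompl : P ((A ∪ B)ᶜ) = 1 - P (A ∪ B) := by
      rw [measure_compl (hAmeas.union hBmeas) (measure_ne_top _ _), measure_univ]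
    calc ENNReal.ofReal (1 - δ) ≤ 1 - ENNReal.ofReal (2*δ/3) := by
          apply ENNReal.le_sub_of_add_le_right ENNReal.ofReal_ne_top
          rw [← ENNReal.ofReal_add (by linarith) (by positivity)]
          exact ENNReal.ofReal_le_one.2 (by linarith)
      _ ≤ 1 - P (A ∪ B) := tsub_le_tsub_left hunion 1
      _ = P ((A ∪ B)ᶜ) := hcompl.symm
      _ ≤ P T := measure_mono hsub
end
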